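/- For any nonempty Cayley permutation ρ with m := mdd(ρ) and any inversion sequence α of length m, the concatenation α·ρ is a ρ-minimal inversion sequence. Consequently, the number of ρ-minimal inversion sequences is at least m! (the number of inversion sequences of length m). -/

import Mathlib

/-- `σ` is an inversion sequence: `σ_i ∈ {0,…,i-1}` (0-indexed: `σ[i] ≤ i`). -/
def IsInvSeq (σ : List ℕ) : Prop := ∀ i < σ.length, σ.getD i 0 ≤ i

/-- `σ` is a Cayley permutation: its value set is `{0,…,max σ}` (downward closed). -/
def IsCayley (σ : List ℕ) : Prop := ∀ v w : ℕ, w ∈ σ → v ≤ w → v ∈ σ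

/-- Maximum diagonal difference `max_i (σ_i - i + 1)` (0-indexed: `max_i (σ[i] - i)`). -/
def mdd (σ : List ℕ) : ℤ :=
  ((List.range σ.length).map (fun i => (σ.getD i 0 : ℤ) - i)).foldr max (-(σ.length : ℤ))

/-- `τ` and `σ` are order-isomorphic sequences of the same length. -/
def OrdIso (τ σ : List ℕ) : Prop :=
  τ.length = σ.length ∧ ∀ i j : ℕ, i < τ.length → j < τ.length →
    (τ.getD i 0 ≤ τ.getD j 0 ↔ σ.getD i 0 ≤ σ.getD j 0)

/-- `σ` contains the pattern `ρ` (i.e. `ρ ⪯ σ`): some subsequence of `σ` is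
order-isomorphic to `ρ`. -/
def ContainsPat (σ ρ : List ℕ) : Prop := ∃ τ : List ℕ, τ.Sublist σ ∧ OrdIso ρ τ

/-- The reduction of `σ`: the `j`-th smallest distinct value is replaced by `j-1`. -/
def red (σ : List ℕ) : List ℕ :=
  σ.map (fun v => (σ.toFinset.filter (fun w => w < v)).card)

/-- Number of distinct values of `σ`. -/
def distv (σ : List ℕ) : ℕ := σ.toFinset.card

/-- Positions (0-indexed) of saturated entries of `σ`. -/
def Sat (σ : List ℕ) : Set ℕ := {i | i < σ.length ∧ (σ.getD i 0 : ℤ) - i = mdd σ}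

/-- `σ` is a ρ-minimal inversion sequence: a minimal element, under pattern
containment, of the set of inversion sequences that are Cayley permutations and
contain `ρ`. -/
def IsMinimalFor (ρ σ : List ℕ) : Prop :=
  IsInvSeq σ ∧ IsCayley σ ∧ ContainsPat σ ρ ∧
  ∀ τ : List ℕ, IsInvSeq τ → IsCayley τ → ContainsPat τ ρ → ContainsPat σ τ → τ = σ

-- foldr max lemmas
lemma le_foldr_max (l : List ℤ) (b : ℤ) : ∀ x ∈ l, x ≤ l.foldr max b := by
  induction l with
  | nil => simp
  | cons a t ih =>
    intro x hx
    rcases List.mem_cons.1 hx with rfl | hx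
    · exact le_max_left _ _
    · exact le_trans (ih x hx) (le_max_right _ _)

lemma foldr_max_mem (l : List ℤ) (b : ℤ) : l.foldr max b = b ∨ l.foldr max b ∈ l := by
  induction l with
  | nil => simp
  | cons a t ih =>
    simp only [List.foldr_cons, List.mem_cons]
    rcases le_total a (t.foldr max b) with h | h
    · rw [max_eq_right h]
      rcases ih with h' | h'
      · exact Or.inl h'
      · exact Or.inr (Or.inr h')
    · rw [max_eq_left h]
      exact Or.inr (Or.inl rfl)

lemma mdd_le (ρ : List ℕ) {i : ℕ} (hi : i < ρ.length) :
    (ρ.getD i 0 : ℤ) - i ≤ mdd ρ := by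
  apply le_foldr_max
  simp only [List.mem_map, List.mem_range]
  exact ⟨i, hi, rfl⟩

lemma mdd_nonneg (ρ : List ℕ) (hρ : ρ ≠ []) : 0 ≤ mdd ρ := by
  have h0 : 0 < ρ.length := List.length_pos_iff.2 hρ
  have h1 := mdd_le ρ h0
  have h2 : (0:ℤ) ≤ (ρ.getD 0 0 : ℤ) := Int.ofNat_nonneg _
  push_cast at h1
  linarith

lemma mdd_attained (ρ : List ℕ) (hρ : ρ ≠ []) :
    ∃ i < ρ.length, (ρ.getD i 0 : ℤ) - i = mdd ρ := by
  have h0 : 0 < ρ.length := List.length_pos_iff.2 hρ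
  rcases foldr_max_mem ((List.range ρ.length).map (fun i => (ρ.getD i 0 : ℤ) - i))
      (-(ρ.length : ℤ)) with h | h
  · exfalso
    have := mdd_nonneg ρ hρ
    rw [mdd] at this
    rw [h] at this
    omega
  · simp only [List.mem_map, List.mem_range] at h
    obtain ⟨i, hi, hie⟩ := h
    exact ⟨i, hi, hie⟩

def IsOcc (ρ σ : List ℕ) (e : ℕ → ℕ) : Prop :=
  (∀ j1 j2, j1 < j2 → j2 < ρ.length → e j1 < e j2) ∧
  (∀ j < ρ.length, e j < σ.length) ∧
  (∀ j1 j2, j1 < ρ.length → j2 < ρ.length →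
    (ρ.getD j1 0 ≤ ρ.getD j2 0 ↔ σ.getD (e j1) 0 ≤ σ.getD (e j2) 0))

lemma occ_of_containsPat {σ ρ : List ℕ} (h : ContainsPat σ ρ) : ∃ e, IsOcc ρ σ e := by
  obtain ⟨τ, hsub, hlen, hrel⟩ := h
  obtain ⟨f, hf⟩ := List.sublist_iff_exists_fin_orderEmbedding_get_eq.1 hsub
  refine ⟨fun j => if h : j < τ.length then (f ⟨j, h⟩ : ℕ) else j + σ.length, ?_, ?_, ?_⟩
  · intro j1 j2 h12 h2
    rw [hlen] at h2
    have h1 : j1 < τ.length := lt_trans h12 h2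
    simp only [dif_pos h1, dif_pos h2]
    have : (⟨j1, h1⟩ : Fin τ.length) < ⟨j2, h2⟩ := h12
    exact f.lt_iff_lt.2 this
  · intro j hj
    rw [hlen] at hj
    simp only [dif_pos hj]
    exact (f ⟨j, hj⟩).2
  · intro j1 j2 h1 h2
    rw [hlen] at h1 h2
    simp only [dif_pos h1, dif_pos h2]
    have e1 : τ.getD j1 0 = σ.getD ((f ⟨j1, h1⟩ : Fin σ.length) : ℕ) 0 := by
      rw [List.getD_eq_getElem _ _ h1, List.getD_eq_getElem _ _ (f ⟨j1, h1⟩).2]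
      exact hf ⟨j1, h1⟩
    have e2 : τ.getD j2 0 = σ.getD ((f ⟨j2, h2⟩ : Fin σ.length) : ℕ) 0 := by
      rw [List.getD_eq_getElem _ _ h2, List.getD_eq_getElem _ _ (f ⟨j2, h2⟩).2]
      exact hf ⟨j2, h2⟩
    rw [← e1, ← e2]
    exact hrel j1 j2 (by omega) (by omega)

lemma containsPat_of_occ {σ ρ : List ℕ} (e : ℕ → ℕ) (he : IsOcc ρ σ e) :
    ContainsPat σ ρ := by
  obtain ⟨hmono, hbd, hrel⟩ := he
  set τ := (List.range ρ.length).map (fun j => σ.getD (e j) 0) with hτ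
  have hlen : τ.length = ρ.length := by simp [hτ]
  have hget : ∀ j (h : j < ρ.length), τ.getD j 0 = σ.getD (e j) 0 := by
    intro j h
    rw [List.getD_eq_getElem _ _ (by rw [hlen]; exact h)]
    simp [hτ]
  refine ⟨τ, ?_, hlen.symm, ?_⟩
  · rw [List.sublist_iff_exists_fin_orderEmbedding_get_eq]
    refine ⟨OrderEmbedding.ofStrictMono
      (fun ix : Fin τ.length => (⟨e ix, hbd ix (hlen ▸ ix.2)⟩ : Fin σ.length)) ?_, ?_⟩
    · intro a b hab
      have : e a < e b := hmono a b hab (hlen ▸ b.2)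
      exact this
    · intro ix
      have hix : (ix : ℕ) < ρ.length := hlen ▸ ix.2
      simp only [OrderEmbedding.coe_ofStrictMono, List.get_eq_getElem]
      rw [← List.getD_eq_getElem τ 0 ix.2]
      exact (hget ix hix).trans (List.getD_eq_getElem σ 0 (hbd ix hix))
  · intro i j hi hj
    rw [hget i hi, hget j hj]
    exact hrel i j hi hj

lemma occ_val_ge {ρ σ : List ℕ} (hC : IsCayley ρ) (e : ℕ → ℕ) (he : IsOcc ρ σ e) :
    ∀ j < ρ.length, ρ.getD j 0 ≤ σ.getD (e j) 0 := by
  obtain ⟨hmono, hbd, hrel⟩ := he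
  intro j hj
  classical
  set r := ρ.getD j 0 with hr
  set t := σ.getD (e j) 0 with ht
  have key : ∀ v, v ∈ Finset.range r → ∃ i, i < ρ.length ∧ ρ.getD i 0 = v := by
    intro v hv
    rw [Finset.mem_range] at hv
    have hmem : ρ.getD j 0 ∈ ρ := by
      rw [List.getD_eq_getElem _ _ hj]; exact List.getElem_mem _
    have : v ∈ ρ := hC v _ hmem (le_of_lt hv)
    rw [List.mem_iff_getElem] at this
    obtain ⟨n, hn, hnv⟩ := this
    exact ⟨n, hn, by rw [List.getD_eq_getElem _ _ hn]; exact hnv⟩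
  set f : ℕ → ℕ := fun v =>
    if h : ∃ i, i < ρ.length ∧ ρ.getD i 0 = v then σ.getD (e (Nat.find h)) 0 else 0 with hf
  have hstep : ∀ v ∈ Finset.range r, ∀ (h : ∃ i, i < ρ.length ∧ ρ.getD i 0 = v),
      f v = σ.getD (e (Nat.find h)) 0 ∧ σ.getD (e (Nat.find h)) 0 < t := by
    intro v hv h
    rw [Finset.mem_range] at hv
    obtain ⟨hi, hiv⟩ := Nat.find_spec h
    constructor
    · simp only [hf, dif_pos h]
    · have hle : ρ.getD (Nat.find h) 0 ≤ ρ.getD j 0 := by rw [hiv]; exact le_of_lt hv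
      have hnle : ¬ (ρ.getD j 0 ≤ ρ.getD (Nat.find h) 0) := by rw [hiv]; omega
      have h1 := (hrel _ _ hi hj).1 hle
      have h2 : ¬ (σ.getD (e j) 0 ≤ σ.getD (e (Nat.find h)) 0) :=
        fun hh => hnle ((hrel _ _ hj hi).2 hh)
      omega
  have hmaps : ∀ v ∈ Finset.range r, f v ∈ Finset.range t := by
    intro v hv
    have h := key v hv
    obtain ⟨h1, h2⟩ := hstep v hv h
    rw [Finset.mem_range, h1]
    exact h2
  have hinj : Set.InjOn f (Finset.range r) := by
    intro v hv v' hv' hvv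
    simp only [Finset.coe_range, Set.mem_Iio] at hv hv'
    have hv0 : v ∈ Finset.range r := Finset.mem_range.2 hv
    have hv0' : v' ∈ Finset.range r := Finset.mem_range.2 hv'
    have h := key v hv0
    have h' := key v' hv0'
    obtain ⟨hfv, _⟩ := hstep v hv0 h
    obtain ⟨hfv', _⟩ := hstep v' hv0' h'
    obtain ⟨hi, hiv⟩ := Nat.find_spec h
    obtain ⟨hi', hiv'⟩ := Nat.find_spec h'
    rw [hfv, hfv'] at hvv
    have e1 : ρ.getD (Nat.find h) 0 ≤ ρ.getD (Nat.find h') 0 :=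
      (hrel _ _ hi hi').2 (le_of_eq hvv)
    have e2 : ρ.getD (Nat.find h') 0 ≤ ρ.getD (Nat.find h) 0 :=
      (hrel _ _ hi' hi).2 (le_of_eq hvv.symm)
    rw [hiv, hiv'] at e1 e2
    omega
  have := Finset.card_le_card_of_injOn f hmaps hinj
  simpa using this

lemma ordIso_refl (τ : List ℕ) : OrdIso τ τ := ⟨rfl, fun _ _ _ _ => Iff.rfl⟩

lemma ordIso_symm {τ σ : List ℕ} (h : OrdIso τ σ) : OrdIso σ τ := by
  obtain ⟨hlen, hrel⟩ := h
  exact ⟨hlen.symm, fun i j hi hj =>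
    (hrel i j (hlen ▸ hi) (hlen ▸ hj)).symm⟩

lemma cayley_le_of_ordIso {ρ τ : List ℕ} (h : OrdIso ρ τ) (hC : IsCayley ρ) :
    ∀ j < ρ.length, ρ.getD j 0 ≤ τ.getD j 0 := by
  have hocc : IsOcc ρ τ id := by
    refine ⟨fun _ _ h12 _ => h12, fun j hj => h.1 ▸ hj, fun i j hi hj => h.2 i j hi hj⟩
  simpa using occ_val_ge hC id hocc

lemma cayley_eq_of_ordIso {τ σ : List ℕ} (h : OrdIso τ σ) (h1 : IsCayley τ)
    (h2 : IsCayley σ) : τ = σ := by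
  have hA := cayley_le_of_ordIso h h1
  have hB := cayley_le_of_ordIso (ordIso_symm h) h2
  apply List.ext_getElem h.1
  intro n hn1 hn2
  have e1 := hA n hn1
  have e2 := hB n hn2
  rw [List.getD_eq_getElem _ _ hn1, List.getD_eq_getElem _ _ hn2] at e1 e2
  omega

lemma occ_ge_add {e : ℕ → ℕ} {c : ℕ}
    (hmono : ∀ j1 j2, j1 < j2 → j2 < c → e j1 < e j2) :
    ∀ d j, j + d < c → e j + d ≤ e (j + d) := by
  intro d
  induction d with
  | zero => intro j _; simp
  | succ p ih =>
    intro j hj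
    have h1 : e j + p ≤ e (j + p) := ih j (by omega)
    have h2 : e (j + p) < e (j + (p + 1)) := hmono _ _ (by omega) (by omega)
    omega

lemma part1 (ρ : List ℕ) (hρ : ρ ≠ []) (hC : IsCayley ρ) (α : List ℕ)
    (hα : IsInvSeq α) (hlen : (α.length : ℤ) = mdd ρ) :
    IsInvSeq (α ++ ρ) ∧ IsCayley (α ++ ρ) ∧ ContainsPat (α ++ ρ) ρ ∧
    ∀ τ : List ℕ, IsInvSeq τ → IsCayley τ → ContainsPat τ ρ → ContainsPat (α ++ ρ) τ →
      τ = α ++ ρ := by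
  set m := α.length with hm
  set k := ρ.length with hk
  have hval : ∀ j < k, ρ.getD j 0 ≤ j + m := by
    intro j hj
    have := mdd_le ρ hj
    rw [← hlen] at this
    omega
  obtain ⟨js, hjs, hjse⟩ := mdd_attained ρ hρ
  have hjsv : ρ.getD js 0 = js + m := by
    rw [← hlen] at hjse
    omega
  have hinv : IsInvSeq (α ++ ρ) := by
    intro i hi
    rw [List.length_append] at hi
    rcases lt_or_ge i m with h | h
    · rw [List.getD_append _ _ _ _ h]
      exact hα i h
    · rw [List.getD_append_right _ _ _ _ h, ← hm]
      have := hval (i - m) (by omega)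
      omega
  have hcay : IsCayley (α ++ ρ) := by
    intro v w hw hvw
    rw [List.mem_append] at hw ⊢
    rcases hw with hw | hw
    · right
      rw [List.mem_iff_getElem] at hw
      obtain ⟨n, hn, hnw⟩ := hw
      have hwn : w ≤ n := by
        have := hα n hn
        rw [List.getD_eq_getElem _ _ hn] at this
        omega
      have hwm : w < m := by omega
      have hjmem : ρ.getD js 0 ∈ ρ := by
        rw [List.getD_eq_getElem _ _ hjs]; exact List.getElem_mem _
      exact hC v _ hjmem (by omega)
    · exact Or.inr (hC v w hw hvw)
  have hcont : ContainsPat (α ++ ρ) ρ :=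
    ⟨ρ, List.sublist_append_right α ρ, ordIso_refl ρ⟩
  refine ⟨hinv, hcay, hcont, ?_⟩
  intro τ hτinv hτC hτρ hcontains
  obtain ⟨τ₂, hsub, hOI⟩ := hcontains
  obtain ⟨e, he⟩ := occ_of_containsPat hτρ
  have hvge := occ_val_ge hC e he
  have hbd := he.2.1
  have hej : ∀ j < k, ρ.getD j 0 ≤ e j := by
    intro j hj
    have h1 := hvge j hj
    have h2 := hτinv (e j) (hbd j hj)
    omega
  have hklen : 0 < k := List.length_pos_iff.2 hρ
  have hlast : m + k - 1 ≤ e (k - 1) := by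
    have h1 : js + m ≤ e js := hjsv ▸ hej js hjs
    by_cases hq : js = k - 1
    · rw [← hq]; omega
    · have h2 := occ_ge_add he.1 (k - 1 - js) js (by omega)
      have h3 : js + (k - 1 - js) = k - 1 := by omega
      rw [h3] at h2
      omega
  have hτlen : m + k ≤ τ.length := by
    have := hbd (k - 1) (by omega)
    omega
  have hτlen2 : τ.length = τ₂.length := hOI.1
  have hτ₂len : τ₂.length ≤ m + k := by
    have := hsub.length_le
    rw [List.length_append] at this
    omega
  have heq : τ₂ = α ++ ρ := by
    apply hsub.eq_of_length
    rw [List.length_append]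
    omega
  rw [heq] at hOI
  exact cayley_eq_of_ordIso hOI hτC hcay

lemma red_length (σ : List ℕ) : (red σ).length = σ.length := by simp [red]

lemma red_getD (σ : List ℕ) {i : ℕ} (h : i < σ.length) :
    (red σ).getD i 0 = (σ.toFinset.filter (fun w => w < σ.getD i 0)).card := by
  rw [List.getD_eq_getElem _ _ (by rw [red_length]; exact h)]
  simp only [red, List.getElem_map]
  rw [List.getD_eq_getElem _ _ h]

lemma filter_lt_card_le (F : Finset ℕ) (v : ℕ) :
    (F.filter (fun w => w < v)).card ≤ v := by
  have : F.filter (fun w => w < v) ⊆ Finset.range v := by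
    intro w hw
    rw [Finset.mem_filter] at hw
    exact Finset.mem_range.2 hw.2
  simpa using Finset.card_le_card this

lemma filter_lt_card_lt {F : Finset ℕ} {a b : ℕ} (hb : b ∈ F) (hba : b < a) :
    (F.filter (fun w => w < b)).card < (F.filter (fun w => w < a)).card := by
  apply Finset.card_lt_card
  constructor
  · intro w hw
    rw [Finset.mem_filter] at hw ⊢
    exact ⟨hw.1, by omega⟩
  · intro hsub
    have : b ∈ F.filter (fun w => w < a) := Finset.mem_filter.2 ⟨hb, hba⟩
    have := hsub this
    rw [Finset.mem_filter] at this
    omega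

lemma mem_toFinset_of_lt {σ : List ℕ} {i : ℕ} (h : i < σ.length) :
    σ.getD i 0 ∈ σ.toFinset := by
  rw [List.mem_toFinset, List.getD_eq_getElem _ _ h]
  exact List.getElem_mem _

lemma ordIso_red (σ : List ℕ) : OrdIso (red σ) σ := by
  refine ⟨red_length σ, ?_⟩
  intro i j hi hj
  rw [red_length] at hi hj
  rw [red_getD σ hi, red_getD σ hj]
  constructor
  · intro h
    by_contra hlt
    push_neg at hlt
    have := filter_lt_card_lt (mem_toFinset_of_lt hj) hlt
    omega
  · intro h
    apply Finset.card_le_card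
    intro w hw
    rw [Finset.mem_filter] at hw ⊢
    exact ⟨hw.1, by omega⟩

lemma red_cayley (σ : List ℕ) : IsCayley (red σ) := by
  classical
  set F := σ.toFinset with hF
  set f : ℕ → ℕ := fun v => (F.filter (fun w => w < v)).card with hf
  have hinj : Set.InjOn f F := by
    intro u hu v hv huv
    simp only [Finset.coe_mem, Finset.mem_coe] at hu hv
    by_contra hne
    rcases Nat.lt_or_ge u v with h | h
    · have := filter_lt_card_lt hu h
      simp only [hf] at huv; omega
    · have hlt : v < u := by omega
      have := filter_lt_card_lt hv hlt
      simp only [hf] at huv; omega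
  have himg : F.image f = Finset.range F.card := by
    apply Finset.eq_of_subset_of_card_le
    · intro c hc
      rw [Finset.mem_image] at hc
      obtain ⟨v, hv, hvc⟩ := hc
      rw [Finset.mem_range, ← hvc]
      have : F.filter (fun w => w < v) ⊂ F := by
        constructor
        · exact Finset.filter_subset _ _
        · intro hsub
          have := hsub hv
          rw [Finset.mem_filter] at this
          omega
      exact Finset.card_lt_card this
    · rw [Finset.card_range, Finset.card_image_of_injOn hinj]
  intro v w hw hvw
  simp only [red, List.mem_map] at hw
  obtain ⟨u, hu, huw⟩ := hw
  have huF : u ∈ F := List.mem_toFinset.2 hu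
  have hwc : w ∈ Finset.range F.card := by
    rw [← himg, Finset.mem_image]
    exact ⟨u, huF, huw⟩
  have hvc : v ∈ Finset.range F.card := by
    rw [Finset.mem_range] at hwc ⊢; omega
  rw [← himg, Finset.mem_image] at hvc
  obtain ⟨u', hu', hu'v⟩ := hvc
  simp only [red, List.mem_map]
  exact ⟨u', List.mem_toFinset.1 hu', hu'v⟩

lemma not_mem_eraseIdx {σ : List ℕ} {d : ℕ} (hd : d < σ.length)
    (hcount : σ.count (σ.getD d 0) = 1) : σ.getD d 0 ∉ σ.eraseIdx d := by
  set v := σ.getD d 0 with hv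
  have hsplit : σ.count v = (σ.take d).count v + (σ.drop d).count v := by
    conv_lhs => rw [← List.take_append_drop d σ]
    rw [List.count_append]
  have hdrop : (σ.drop d).count v = (σ.drop (d+1)).count v + 1 := by
    rw [List.drop_eq_getElem_cons hd, ← List.getD_eq_getElem σ 0 hd, ← hv,
      List.count_cons_self]
  rw [List.eraseIdx_eq_take_drop_succ]
  intro hmem
  have : 0 < ((σ.take d) ++ (σ.drop (d+1))).count v := List.one_le_count_iff.2 hmem
  rw [List.count_append] at this
  omega

lemma w_at {σ : List ℕ} {d : ℕ} (hd : d < σ.length) {a : ℕ} (ha : a < σ.length)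
    (had : a ≠ d) :
    (σ.eraseIdx d).getD (if a < d then a else a - 1) 0 = σ.getD a 0 := by
  have hlen : (σ.eraseIdx d).length = σ.length - 1 := by
    rw [List.length_eraseIdx, if_pos hd]
  rcases Nat.lt_or_ge a d with h | h
  · rw [if_pos h]
    have hb : a < (σ.eraseIdx d).length := by omega
    rw [List.getD_eq_getElem _ 0 hb, List.getElem_eraseIdx, dif_pos h,
      ← List.getD_eq_getElem σ 0 ha]
  · have h' : d < a := by omega
    rw [if_neg (by omega)]
    have hb : a - 1 < (σ.eraseIdx d).length := by omega
    rw [List.getD_eq_getElem _ 0 hb, List.getElem_eraseIdx, dif_neg (by omega),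
      ← List.getD_eq_getElem σ 0 (by omega : a - 1 + 1 < σ.length)]
    congr 1
    omega

lemma mem_w {σ : List ℕ} {d : ℕ} (hd : d < σ.length) {a : ℕ} (ha : a < σ.length)
    (had : a ≠ d) : σ.getD a 0 ∈ (σ.eraseIdx d).toFinset := by
  have hlen : (σ.eraseIdx d).length = σ.length - 1 := by
    rw [List.length_eraseIdx, if_pos hd]
  have hb : (if a < d then a else a - 1) < (σ.eraseIdx d).length := by
    split_ifs <;> omega
  rw [List.mem_toFinset, ← w_at hd ha had, List.getD_eq_getElem _ 0 hb]
  exact List.getElem_mem _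

lemma trim {ρ σ : List ℕ} (hσinv : IsInvSeq σ) {e : ℕ → ℕ}
    (he : IsOcc ρ σ e) {d : ℕ} (hd : d < σ.length)
    (hdP : ∀ j < ρ.length, e j ≠ d)
    (H : ∀ t, d < t → t < σ.length → σ.getD t 0 = t → σ.count (σ.getD d 0) = 1) :
    ∃ τ : List ℕ, IsInvSeq τ ∧ IsCayley τ ∧ ContainsPat τ ρ ∧ ContainsPat σ τ ∧
      τ.length = σ.length - 1 := by
  set w := σ.eraseIdx d with hw
  have hwlen : w.length = σ.length - 1 := by
    rw [hw, List.length_eraseIdx, if_pos hd]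
  refine ⟨red w, ?_, red_cayley w, ?_, ⟨w, List.eraseIdx_sublist σ d, ordIso_red w⟩,
    by rw [red_length, hwlen]⟩
  · -- IsInvSeq (red w)
    intro i hi
    rw [red_length] at hi
    have hwget : w.getD i 0 = if i < d then σ.getD i 0 else σ.getD (i+1) 0 := by
      rcases Nat.lt_or_ge i d with h | h
      · rw [if_pos h]
        have := w_at hd (by omega : i < σ.length) (by omega)
        rw [if_pos h] at this
        exact this
      · rw [if_neg (by omega)]
        have := w_at hd (by omega : i + 1 < σ.length) (by omega)
        rw [if_neg (by omega)] at this
        simpa using this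
    rw [red_getD w hi, hwget]
    split_ifs with hid
    · calc (w.toFinset.filter (fun x => x < σ.getD i 0)).card
          ≤ σ.getD i 0 := filter_lt_card_le _ _
        _ ≤ i := hσinv i (by omega)
    · have hi1 : i + 1 < σ.length := by rw [hwlen] at hi; omega
      rcases Nat.lt_or_ge (σ.getD (i+1) 0) (i+1) with hsat | hsat
      · calc (w.toFinset.filter (fun x => x < σ.getD (i+1) 0)).card
            ≤ σ.getD (i+1) 0 := filter_lt_card_le _ _
          _ ≤ i := by omega
      · have hsat' : σ.getD (i+1) 0 = i + 1 := le_antisymm (hσinv _ hi1) hsat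
        have hcount := H (i+1) (by omega) hi1 hsat'
        have hnot := not_mem_eraseIdx hd hcount
        have hsub : w.toFinset.filter (fun x => x < σ.getD (i+1) 0) ⊆
            (Finset.range (i+1)).erase (σ.getD d 0) := by
          intro x hx
          rw [Finset.mem_filter, List.mem_toFinset] at hx
          rw [Finset.mem_erase, Finset.mem_range]
          refine ⟨?_, by omega⟩
          intro hxd
          rw [hxd] at hx
          exact hnot hx.1
        have hdr : σ.getD d 0 ∈ Finset.range (i+1) := by
          rw [Finset.mem_range]
          have := hσinv d hd
          omega
        calc (w.toFinset.filter (fun x => x < σ.getD (i+1) 0)).card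
            ≤ ((Finset.range (i+1)).erase (σ.getD d 0)).card := Finset.card_le_card hsub
          _ ≤ i := by rw [Finset.card_erase_of_mem hdr, Finset.card_range]; omega
  · -- ContainsPat (red w) ρ
    apply containsPat_of_occ (fun j => if e j < d then e j else e j - 1)
    obtain ⟨hmono, hbd, hrel⟩ := he
    have hval : ∀ j, j < ρ.length → (red w).getD (if e j < d then e j else e j - 1) 0 =
        (w.toFinset.filter (fun x => x < σ.getD (e j) 0)).card := by
      intro j hj
      have hejd : e j ≠ d := hdP j hj
      have hejl : e j < σ.length := hbd j hj
      have hlt : (if e j < d then e j else e j - 1) < w.length := by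
        rw [hwlen]; split_ifs <;> omega
      rw [red_getD w hlt, w_at hd hejl hejd]
    refine ⟨?_, ?_, ?_⟩
    · intro j1 j2 h12 h2
      have := hmono j1 j2 h12 h2
      have h1d := hdP j1 (by omega)
      have h2d := hdP j2 h2
      dsimp only
      split_ifs <;> omega
    · intro j hj
      have := hbd j hj
      have := hdP j hj
      rw [red_length, hwlen]
      dsimp only
      split_ifs <;> omega
    · intro j1 j2 h1 h2
      dsimp only
      rw [hval j1 h1, hval j2 h2, hrel j1 j2 h1 h2]
      constructor
      · intro h
        apply Finset.card_le_card
        intro x hx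
        rw [Finset.mem_filter] at hx ⊢
        exact ⟨hx.1, by omega⟩
      · intro h
        by_contra hgt
        push_neg at hgt
        have hmem : σ.getD (e j2) 0 ∈ w.toFinset :=
          mem_w hd (hbd j2 h2) (hdP j2 h2)
        have := filter_lt_card_lt hmem hgt
        omega

lemma minimal_length_le {ρ σ : List ℕ} (hρ : ρ ≠ []) (hmin : IsMinimalFor ρ σ) :
    σ.length ≤ 3 * ρ.length := by
  classical
  obtain ⟨hinv, hcay, hcont, hminim⟩ := hmin
  obtain ⟨e, he⟩ := occ_of_containsPat hcont
  set n := σ.length with hn'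
  set k := ρ.length with hk'
  have hk : 0 < k := List.length_pos_iff.2 hρ
  have hn : 0 < n := lt_of_le_of_lt (Nat.zero_le _) (he.2.1 0 hk)
  have key : ∀ d, d < n → (∀ j, j < k → e j ≠ d) →
      (∀ t, d < t → t < n → σ.getD t 0 = t → σ.count (σ.getD d 0) = 1) → False := by
    intro d hdn hdP H
    obtain ⟨τ, h1, h2, h3, h4, h5⟩ := trim hinv he hdn hdP H
    have := hminim τ h1 h2 h3 h4
    rw [this] at h5
    omega
  set ssat := (Finset.range n).filter (fun i => σ.getD i 0 = i) with hssat
  have h0s : 0 ∈ ssat := by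
    refine Finset.mem_filter.2 ⟨Finset.mem_range.2 hn, ?_⟩
    have := hinv 0 hn
    omega
  set s := ssat.max' ⟨0, h0s⟩ with hs'
  obtain ⟨hsn', hss⟩ := Finset.mem_filter.1 (show s ∈ ssat from ssat.max'_mem ⟨0, h0s⟩)
  have hsn : s < n := Finset.mem_range.1 hsn'
  have hsmax : ∀ t, t < n → σ.getD t 0 = t → t ≤ s := by
    intro t htn hts
    exact ssat.le_max' t (Finset.mem_filter.2 ⟨Finset.mem_range.2 htn, hts⟩)
  set Pfin := (Finset.range k).image e with hPfin
  have hPcard : Pfin.card ≤ k := by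
    calc Pfin.card ≤ (Finset.range k).card := Finset.card_image_le
      _ = k := Finset.card_range k
  have hPmem : ∀ d, d < n → s < d → d ∈ Pfin := by
    intro d hdn hsd
    by_contra hno
    have hno' : ∀ j, j < k → e j ≠ d := by
      intro j hj hje
      exact hno (Finset.mem_image.2 ⟨j, Finset.mem_range.2 hj, hje⟩)
    apply key d hdn hno'
    intro t hdt htn hsat
    exact absurd (hsmax t htn hsat) (by omega)
  have hIco : Finset.Ico (s+1) n ⊆ Pfin := by
    intro d hd
    rw [Finset.mem_Ico] at hd
    exact hPmem d hd.2 (by omega)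
  have hsk : n - (s+1) ≤ k := by
    have := Finset.card_le_card hIco
    rw [Nat.card_Ico] at this
    omega
  have hcount2 : ∀ d, d < n → d ∉ Pfin → 2 ≤ σ.count (σ.getD d 0) := by
    intro d hdn hdP
    have hmem : σ.getD d 0 ∈ σ := by
      rw [List.getD_eq_getElem σ 0 hdn]; exact List.getElem_mem _
    have h1 : 1 ≤ σ.count (σ.getD d 0) := List.one_le_count_iff.2 hmem
    by_contra hc
    push_neg at hc
    have hc1 : σ.count (σ.getD d 0) = 1 := by omega
    have hno' : ∀ j, j < k → e j ≠ d := by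
      intro j hj hje
      exact hdP (Finset.mem_image.2 ⟨j, Finset.mem_range.2 hj, hje⟩)
    exact key d hdn hno' (fun _ _ _ _ => hc1)
  set F := σ.toFinset with hF
  have hFcard : s + 1 ≤ F.card := by
    have hsub : Finset.range (s+1) ⊆ F := by
      intro v hv
      rw [Finset.mem_range] at hv
      rw [hF, List.mem_toFinset]
      have hmem : σ.getD s 0 ∈ σ := by
        rw [List.getD_eq_getElem σ 0 hsn]; exact List.getElem_mem _
      exact hcay v _ hmem (by omega)
    have := Finset.card_le_card hsub
    rwa [Finset.card_range] at this
  set U := F.filter (fun v => σ.count v = 1) with hU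
  have hUcard : U.card ≤ k := by
    have hUP : ∀ v ∈ U, ∃ i, i < n ∧ σ.getD i 0 = v := by
      intro v hv
      rw [hU, Finset.mem_filter, hF, List.mem_toFinset, List.mem_iff_getElem] at hv
      obtain ⟨⟨i, hi, hiv⟩, _⟩ := hv
      exact ⟨i, hi, by rw [List.getD_eq_getElem σ 0 hi]; exact hiv⟩
    set g : ℕ → ℕ := fun v =>
      if h : ∃ i, i < n ∧ σ.getD i 0 = v then Nat.find h else 0 with hg
    have hgspec : ∀ v ∈ U, g v < n ∧ σ.getD (g v) 0 = v := by
      intro v hv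
      have h := hUP v hv
      have := Nat.find_spec h
      simp only [hg, dif_pos h]
      exact this
    have hmaps : ∀ v ∈ U, g v ∈ Pfin := by
      intro v hv
      obtain ⟨hgn, hgv⟩ := hgspec v hv
      by_contra hno
      have := hcount2 (g v) hgn hno
      rw [hgv] at this
      rw [hU, Finset.mem_filter] at hv
      omega
    have hinj : Set.InjOn g U := by
      intro v hv v' hv' hvv
      have h1 := (hgspec v hv).2
      have h2 := (hgspec v' hv').2
      rw [← h1, ← h2, hvv]
    calc U.card ≤ Pfin.card := Finset.card_le_card_of_injOn g hmaps hinj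
      _ ≤ k := hPcard
  have hsum : ∑ v ∈ F, σ.count v = n := by
    rw [hn', hF]
    simpa using Multiset.toFinset_sum_count_eq (σ : Multiset ℕ)
  have hpoint : ∀ v ∈ F, (if σ.count v = 1 then 1 else 2) ≤ σ.count v := by
    intro v hv
    rw [hF, List.mem_toFinset] at hv
    have := List.one_le_count_iff.2 hv
    split_ifs with h
    · omega
    · omega
  have hsum2 : (∑ v ∈ F, if σ.count v = 1 then 1 else 2) ≤ n := by
    rw [← hsum]
    exact Finset.sum_le_sum hpoint
  have hsum3 : (∑ v ∈ F, if σ.count v = 1 then 1 else 2) =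
      U.card + 2 * (F.card - U.card) := by
    rw [Finset.sum_ite, Finset.sum_const, Finset.sum_const, smul_eq_mul, smul_eq_mul]
    have hneg := Finset.card_filter_add_card_filter_not
      (s := F) (p := fun v => σ.count v = 1)
    rw [← hU] at hneg ⊢
    omega
  have hUF : U.card ≤ F.card := Finset.card_le_card (Finset.filter_subset _ _)
  have hFn : F.card ≤ n := by
    rw [hF, hn']
    exact List.toFinset_card_le σ
  omega

lemma minimal_finite (ρ : List ℕ) (hρ : ρ ≠ []) : {σ | IsMinimalFor ρ σ}.Finite := by
  set N := 3 * ρ.length with hN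
  apply Set.Finite.subset
    (Set.Finite.image (fun l : List (Fin N) => l.map Fin.val)
      (List.finite_length_le (Fin N) N))
  intro σ hσ
  have hlen := minimal_length_le hρ hσ
  have hval : ∀ x ∈ σ, x < N := by
    intro x hx
    rw [List.mem_iff_getElem] at hx
    obtain ⟨i, hi, hiv⟩ := hx
    have := hσ.1 i hi
    rw [List.getD_eq_getElem σ 0 hi] at this
    omega
  refine ⟨σ.pmap (fun x h => (⟨x, h⟩ : Fin N)) hval, ?_, ?_⟩
  · simp only [Set.mem_setOf_eq, List.length_pmap]
    exact hlen
  · show (List.pmap (fun x h => (⟨x, h⟩ : Fin N)) σ hval).map Fin.val = σ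
    rw [List.map_pmap]
    simp

lemma invseq_ncard (M : ℕ) :
    {α : List ℕ | IsInvSeq α ∧ α.length = M}.ncard = Nat.factorial M := by
  have he : {α : List ℕ | IsInvSeq α ∧ α.length = M} ≃ (∀ i : Fin M, Fin (i.1+1)) := by
    refine
      { toFun := fun α => fun i => ⟨(α : List ℕ).getD i 0, ?_⟩
        invFun := fun f => ⟨List.ofFn (fun i => (f i).1), ?_, by simp⟩
        left_inv := ?_
        right_inv := ?_ }
    · have h2 := α.2.2
      have := α.2.1 i.1 (by rw [h2]; exact i.2)
      omega
    · intro i hi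
      rw [List.length_ofFn] at hi
      rw [List.getD_eq_getElem _ 0 (by rw [List.length_ofFn]; exact hi),
        List.getElem_ofFn]
      exact Nat.lt_succ_iff.1 (f ⟨i, hi⟩).2
    · rintro ⟨α, hα1, hα2⟩
      apply Subtype.ext
      apply List.ext_getElem
      · simp [hα2]
      · intro n h1 h2
        rw [List.length_ofFn] at h1
        simp only [List.getElem_ofFn]
        rw [List.getD_eq_getElem α 0 h2]
    · intro f
      funext i
      apply Fin.ext
      simp only
      rw [List.getD_eq_getElem _ 0 (by rw [List.length_ofFn]; exact i.2),
        List.getElem_ofFn]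
  calc {α : List ℕ | IsInvSeq α ∧ α.length = M}.ncard
      = Nat.card {α : List ℕ | IsInvSeq α ∧ α.length = M} :=
        (Nat.card_coe_set_eq _).symm
    _ = Nat.card (∀ i : Fin M, Fin (i.1+1)) := Nat.card_congr he
    _ = Fintype.card (∀ i : Fin M, Fin (i.1+1)) := Nat.card_eq_fintype_card
    _ = ∏ i : Fin M, (i.1+1) := by simp [Fintype.card_pi]
    _ = ∏ i ∈ Finset.range M, (i+1) := Fin.prod_univ_eq_prod_range _ _
    _ = Nat.factorial M := Finset.prod_range_add_one_eq_factorial M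

theorem stmt14 (ρ : List ℕ) (hρ : ρ ≠ []) (hC : IsCayley ρ) :
    (∀ α : List ℕ, IsInvSeq α → (α.length : ℤ) = mdd ρ → IsMinimalFor ρ (α ++ ρ)) ∧
    Nat.factorial (mdd ρ).toNat ≤ {σ : List ℕ | IsMinimalFor ρ σ}.ncard := by
  constructor
  · intro α hαinv hαlen
    exact part1 ρ hρ hC α hαinv hαlen
  · set M := (mdd ρ).toNat with hM
    have hMeq : (M : ℤ) = mdd ρ := Int.toNat_of_nonneg (mdd_nonneg ρ hρ)
    set A := {α : List ℕ | IsInvSeq α ∧ α.length = M} with hA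
    have hBsub : (fun α : List ℕ => α ++ ρ) '' A ⊆ {σ | IsMinimalFor ρ σ} := by
      rintro _ ⟨α, ⟨hα1, hα2⟩, rfl⟩
      exact part1 ρ hρ hC α hα1 (by rw [hα2]; exact hMeq)
    have hinj : Set.InjOn (fun α : List ℕ => α ++ ρ) A :=
      fun a _ b _ h => List.append_left_injective ρ h
    calc Nat.factorial M = A.ncard := (invseq_ncard M).symm
      _ = ((fun α : List ℕ => α ++ ρ) '' A).ncard :=
          (Set.ncard_image_of_injOn hinj).symm
      _ ≤ {σ : List ℕ | IsMinimalFor ρ σ}.ncard :=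
          Set.ncard_le_ncard hBsub (minimal_finite ρ hρ)
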